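/- For every natural number n ≥ 1, the list of denominators (in lowest terms) of the elements of the Farey set F_n, listed in increasing order of the elements, is a palindrome; that is, this list of denominators equals its own reverse. -/

import Mathlib

lemma den_one_sub (q : ℚ) : (1 - q).den = q.den := by
  apply Nat.dvd_antisymm
  · have h := Rat.add_den_dvd 1 (-q)
    simpa [Rat.den_neg_eq_den, sub_eq_add_neg] using h
  · have h := Rat.add_den_dvd (1 - q) (-1)
    have : ((1 - q) + (-1)) = -q := by ring
    rw [this, Rat.den_neg_eq_den] at h
    simpa using h

/-- For `n ≥ 1`, the list of denominators of the elements of the Farey set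
`F_n`, taken in increasing order, is a palindrome. -/
theorem farey_den_list_palindrome (n : ℕ) (hn : 1 ≤ n) (F : Finset ℚ)
    (hF : ∀ q : ℚ, q ∈ F ↔ 0 ≤ q ∧ q ≤ 1 ∧ q.den ≤ n) :
    ((F.sort (· ≤ ·)).map Rat.den).reverse = (F.sort (· ≤ ·)).map Rat.den := by
  set L := F.sort (· ≤ ·) with hL
  have hmemF : ∀ q : ℚ, q ∈ F ↔ (1 - q) ∈ F := by
    intro q
    rw [hF, hF, den_one_sub]
    constructor <;> rintro ⟨h1, h2, h3⟩ <;> exact ⟨by linarith, by linarith, h3⟩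
  have hinj : Function.Injective (fun q : ℚ => 1 - q) := by
    intro a b h; simpa using h
  have hnodup : L.Nodup := F.sort_nodup _
  have hsorted : L.Pairwise (· ≤ ·) := F.pairwise_sort _
  have hperm : (L.map (fun q => 1 - q)).reverse.Perm L := by
    refine (List.perm_ext_iff_of_nodup ?_ hnodup).mpr ?_
    · exact List.nodup_reverse.mpr (hnodup.map hinj)
    · intro a
      simp only [List.mem_reverse, List.mem_map, Finset.mem_sort, hL]
      constructor
      · rintro ⟨b, hb, rfl⟩; exact (hmemF b).mp hb
      · intro ha
        exact ⟨1 - a, (hmemF a).mp ha, by ring⟩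
  have hsorted2 : (L.map (fun q => 1 - q)).reverse.Pairwise (· ≤ ·) := by
    refine List.pairwise_reverse.mpr ?_
    refine List.Pairwise.map _ ?_ hsorted
    intro a b hab
    linarith
  have hkey : (L.map (fun q => 1 - q)).reverse = L :=
    List.Perm.eq_of_pairwise' hsorted2 hsorted hperm
  calc (L.map Rat.den).reverse
      = (L.reverse).map Rat.den := by rw [List.map_reverse]
    _ = (((L.map (fun q => 1 - q)).reverse).reverse).map Rat.den := by rw [hkey]
    _ = (L.map (fun q => 1 - q)).map Rat.den := by rw [List.reverse_reverse]
    _ = L.map Rat.den := by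
        rw [List.map_map]
        exact List.map_congr_left fun q _ => den_one_sub q
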